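/- Let A be a deterministic finite automaton with Z ∈ LOOP_A and s ∈ Z, and suppose every state of A is reachable from s₀. If Z is not a terminal strongly connected component of A, then V_{(s,Z)}^ω is nowhere dense in the Cantor space X^ω. -/

import Mathlib

open Set

/-- `w` is a finite prefix of the infinite word `ξ`. -/
def InfPrefix {X : Type*} (w : List X) (ξ : ℕ → X) : Prop :=
  ∀ i : Fin w.length, w.get i = ξ i.val

/-- The set of finite prefixes of elements of `F`. -/
def Pref {X : Type*} (F : Set (ℕ → X)) : Set (List X) :=
  {w | ∃ ξ ∈ F, InfPrefix w ξ}

/-- Concatenation of a finite word in front of an infinite word. -/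
def wordCat {X : Type*} (w : List X) (ξ : ℕ → X) : ℕ → X :=
  fun n => if h : n < w.length then w.get ⟨n, h⟩ else ξ (n - w.length)


/-- A deterministic automaton with initial state and transition function. -/
structure DetAuto (X S : Type*) where
  start : S
  step : S → X → S

/-- The extension of the transition function to finite words. -/
def DetAuto.run {X S : Type*} (A : DetAuto X S) (s : S) (w : List X) : S :=
  w.foldl A.step s

/-- The state reached after reading the first `n` letters of `ξ`. -/
def DetAuto.statesAt {X S : Type*} (A : DetAuto X S) (ξ : ℕ → X) (n : ℕ) : S :=
  A.run A.start (List.ofFn fun i : Fin n => ξ i.val)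

/-- `Inf(A, ξ)`: the set of states visited infinitely often on input `ξ`. -/
def AInf {X S : Type*} (A : DetAuto X S) (ξ : ℕ → X) : Set S :=
  {s | ∀ n : ℕ, ∃ m ≥ n, A.statesAt ξ m = s}

/-- Muller acceptance: `L(A, T)`. -/
def Lang {X S : Type*} (A : DetAuto X S) (T : Set (Set S)) : Set (ℕ → X) :=
  {ξ | AInf A ξ ∈ T}

/-- `LOOP_A`: the set of realizable infinity sets. -/
def Loops {X S : Type*} (A : DetAuto X S) : Set (Set S) :=
  {Z | ∃ ξ : ℕ → X, AInf A ξ = Z}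

/-- Strongly connected components: the loops maximal w.r.t. inclusion, i.e.
any other loop is contained in them or disjoint from them. -/
def IsSCC {X S : Type*} (A : DetAuto X S) (Z : Set S) : Prop :=
  Z ∈ Loops A ∧ ∀ Z' ∈ Loops A, Z' ⊆ Z ∨ Z' ∩ Z = ∅

/-- The relation `Z₁ ↦ Z₂`. -/
def ReachRel {X S : Type*} (A : DetAuto X S) (Z₁ Z₂ : Set S) : Prop :=
  Z₁ ≠ Z₂ ∧ ∃ s ∈ Z₁, ∃ w : List X, A.run s w ∈ Z₂

/-- Terminal strongly connected components. -/
def IsTerminalSCC {X S : Type*} (A : DetAuto X S) (Z : Set S) : Prop :=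
  IsSCC A Z ∧ ∀ Z' : Set S, IsSCC A Z' → Z ≠ Z' → ¬ ReachRel A Z Z'


/-- `v` is an `(s,Z)`-loop completing word. -/
def LoopCompleting {X S : Type*} (A : DetAuto X S) (s : S) (Z : Set S)
    (v : List X) : Prop :=
  v ≠ [] ∧ A.run s v = s ∧ {t | ∃ v' : List X, v' <+: v ∧ A.run s v' = t} = Z ∧
    ∀ v'' : List X, v'' <+: v → v'' ≠ v → A.run s v'' = s →
      {t | ∃ v' : List X, v' <+: v'' ∧ A.run s v' = t} ≠ Z

/-- `V_{(s,Z)}`: the set of `(s,Z)`-loop completing words. -/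
def Vloop {X S : Type*} (A : DetAuto X S) (s : S) (Z : Set S) : Set (List X) :=
  {v | LoopCompleting A s Z v}

/-- `V^ω`: infinite concatenations of non-empty words from `V`. -/
def omegaPow {X : Type*} (V : Set (List X)) : Set (ℕ → X) :=
  {ξ | ∃ f : ℕ → List X, (∀ n, f n ∈ V ∧ f n ≠ []) ∧
    ∀ n : ℕ, InfPrefix (((List.range n).map f).flatten) ξ}


namespace NDAux

variable {X S : Type*}

/-- Prefix of an infinite word. -/
def pfx (ξ : ℕ → X) (n : ℕ) : List X := List.ofFn fun i : Fin n => ξ i.val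

@[simp] lemma pfx_length (ξ : ℕ → X) (n : ℕ) : (pfx ξ n).length = n := by
  simp [pfx]

lemma run_append (A : DetAuto X S) (s : S) (w₁ w₂ : List X) :
    A.run s (w₁ ++ w₂) = A.run (A.run s w₁) w₂ :=
  List.foldl_append

lemma pfx_add (ξ : ℕ → X) (m k : ℕ) :
    pfx ξ (m + k) = pfx ξ m ++ List.ofFn (fun i : Fin k => ξ (m + i.val)) := by
  rw [pfx, List.ofFn_add]; rfl

lemma statesAt_add (A : DetAuto X S) (ξ : ℕ → X) (m k : ℕ) :
    A.statesAt ξ (m + k) = A.run (A.statesAt ξ m)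
      (List.ofFn fun i : Fin k => ξ (m + i.val)) := by
  show A.run A.start (pfx ξ (m + k)) = _
  rw [pfx_add, run_append]; rfl

lemma loop_reach (A : DetAuto X S) {Z' : Set S} (h : Z' ∈ Loops A) {t₁ t₂ : S}
    (h₁ : t₁ ∈ Z') (h₂ : t₂ ∈ Z') : ∃ w : List X, A.run t₁ w = t₂ := by
  obtain ⟨ξ, rfl⟩ := h
  obtain ⟨m, -, hm⟩ := h₁ 0
  obtain ⟨m', hge, hm'⟩ := h₂ m
  refine ⟨List.ofFn fun i : Fin (m' - m) => ξ (m + i.val), ?_⟩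
  rw [← hm, ← statesAt_add, Nat.add_sub_cancel' hge]
  exact hm'

lemma escape (A : DetAuto X S) {Z : Set S} (hZ : Z ∈ Loops A)
    (ht : ¬ IsTerminalSCC A Z) : ∃ s' ∈ Z, ∃ u : List X, A.run s' u ∉ Z := by
  by_cases hscc : IsSCC A Z
  · rw [IsTerminalSCC, not_and] at ht
    have h := ht hscc
    push_neg at h
    obtain ⟨Z', hZ'scc, hne, hrr⟩ := h
    obtain ⟨-, s'', hs'', w, hw⟩ := hrr
    rcases hZ'scc.2 Z hZ with hsub | hdisj
    · obtain ⟨r, hrZ', hrZ⟩ := Set.exists_of_ssubset (hsub.ssubset_of_ne hne)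
      obtain ⟨w₂, hw₂⟩ := loop_reach A hZ'scc.1 hw hrZ'
      exact ⟨s'', hs'', w ++ w₂, by rw [run_append, hw₂]; exact hrZ⟩
    · refine ⟨s'', hs'', w, fun hmem => ?_⟩
      have hmm : A.run s'' w ∈ Z ∩ Z' := ⟨hmem, hw⟩
      rw [hdisj] at hmm
      exact hmm
  · rw [IsSCC, not_and] at hscc
    have h := hscc hZ
    push_neg at h
    obtain ⟨Z', hZ'loop, hnsub, hninter⟩ := h
    obtain ⟨t, htZ', htZ⟩ := hninter
    obtain ⟨r, hrZ', hrZ⟩ := Set.not_subset.mp hnsub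
    obtain ⟨w, hw⟩ := loop_reach A hZ'loop htZ' hrZ'
    exact ⟨t, htZ, w, hw ▸ hrZ⟩

lemma run_take_flatten_mem (A : DetAuto X S) {s : S} {Z : Set S} (hs : s ∈ Z)
    (l : List (List X)) (hl : ∀ v ∈ l, v ∈ Vloop A s Z) (n : ℕ) :
    A.run s (l.flatten.take n) ∈ Z := by
  induction l generalizing n with
  | nil => simpa [DetAuto.run] using hs
  | cons v l ih =>
    have hv : LoopCompleting A s Z v := hl v List.mem_cons_self
    rcases le_or_gt n v.length with h | h
    · rw [List.flatten_cons, List.take_append_of_le_length h]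
      rw [← hv.2.2.1]
      exact ⟨v.take n, List.take_prefix n v, rfl⟩
    · obtain ⟨k, rfl⟩ : ∃ k, n = v.length + k :=
        ⟨n - v.length, (Nat.add_sub_cancel' h.le).symm⟩
      rw [List.flatten_cons, List.take_length_add_append, run_append, hv.2.1]
      exact ih (fun u hu => hl u (List.mem_cons_of_mem _ hu)) k

lemma pfx_eq_of_infPrefix {w : List X} {ξ : ℕ → X} (h : InfPrefix w ξ) :
    pfx ξ w.length = w := by
  apply List.ext_get (by simp)
  intro i h1 h2
  simp only [pfx, List.get_ofFn, Fin.cast_mk]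
  exact (h ⟨i, h2⟩).symm

lemma run_pfx_mem (A : DetAuto X S) {s : S} {Z : Set S} (hs : s ∈ Z)
    {ξ : ℕ → X} (hξ : ξ ∈ omegaPow (Vloop A s Z)) (n : ℕ) :
    A.run s (pfx ξ n) ∈ Z := by
  obtain ⟨f, hf, hpre⟩ := hξ
  have hlen : ∀ m : ℕ, m ≤ (((List.range m).map f).flatten).length := by
    intro m
    induction m with
    | zero => simp
    | succ k ih =>
      rw [List.range_succ, List.map_append, List.flatten_append, List.length_append]
      have h1 : 1 ≤ (f k).length := List.length_pos_iff.mpr (hf k).2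
      have h2 : (([f k] : List (List X)).flatten).length = (f k).length := by simp
      simp only [List.map_cons, List.map_nil] at h2 ⊢
      omega
  have hpfx : pfx ξ n = (((List.range n).map f).flatten).take n := by
    have hl := hlen n
    apply List.ext_get (by simp only [pfx_length, List.length_take]; omega)
    intro i h1 h2
    have hi : i < (((List.range n).map f).flatten).length :=
      lt_of_lt_of_le (by simpa using h1) hl
    have hg : (((List.range n).map f).flatten.take n).get ⟨i, h2⟩ =
        (((List.range n).map f).flatten).get ⟨i, hi⟩ := by
      simp
    rw [hg]
    simp only [pfx, List.get_ofFn, Fin.cast_mk]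
    exact (hpre n ⟨i, hi⟩).symm
  rw [hpfx]
  refine run_take_flatten_mem A hs _ (fun v hv => ?_) n
  obtain ⟨k, -, rfl⟩ := List.mem_map.mp hv
  exact (hf k).1

/-- Cylinder sets. -/
def cyl (w : List X) : Set (ℕ → X) := {ξ | InfPrefix w ξ}

lemma isOpen_cyl [TopologicalSpace X] [DiscreteTopology X] (w : List X) :
    IsOpen (cyl (X := X) w) := by
  have : cyl w = ⋂ i : Fin w.length, (fun ξ : ℕ → X => ξ i.val) ⁻¹' {w.get i} := by
    ext ξ
    simp only [cyl, InfPrefix, Set.mem_setOf_eq, Set.mem_iInter, Set.mem_preimage,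
      Set.mem_singleton_iff]
    exact ⟨fun h i => (h i).symm, fun h i => (h i).symm⟩
  rw [this]
  exact isOpen_iInter_of_finite fun i =>
    (continuous_apply (i.val : ℕ)).isOpen_preimage _ (isOpen_discrete _)

lemma exists_cyl_subset [TopologicalSpace X] [DiscreteTopology X]
    {U : Set (ℕ → X)} (hU : IsOpen U) {ξ : ℕ → X} (hξ : ξ ∈ U) :
    ∃ n : ℕ, cyl (pfx ξ n) ⊆ U := by
  obtain ⟨I, u, hIu, hsub⟩ := isOpen_pi_iff.mp hU ξ hξ
  refine ⟨I.sup id + 1, fun η hη => hsub fun i hi => ?_⟩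
  have hin : i < I.sup id + 1 := Nat.lt_succ_of_le (Finset.le_sup (f := id) hi)
  have hval : η i = ξ i := by
    have h := hη ⟨i, by simpa using hin⟩
    simp only [pfx, List.get_ofFn, Fin.cast_mk] at h
    exact h.symm
  rw [hval]
  exact (hIu i hi).2

lemma infPrefix_of_prefix {w w' : List X} {ξ : ℕ → X} (h : w <+: w')
    (h' : InfPrefix w' ξ) : InfPrefix w ξ := by
  intro i
  obtain ⟨t, rfl⟩ := h
  have hlt : i.val < (w ++ t).length := lt_of_lt_of_le i.isLt (by simp)
  have := h' ⟨i.val, hlt⟩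
  rw [← this]
  show w.get i = (w ++ t).get ⟨i.val, hlt⟩
  simp [List.getElem_append_left i.isLt]

lemma infPrefix_wordCat (w : List X) (ξ : ℕ → X) : InfPrefix w (wordCat w ξ) := by
  intro i
  simp [wordCat, i.isLt]

end NDAux


/-- If every state is reachable and Z ∈ LOOP_A is not a terminal SCC,
then V_{(s,Z)}^ω is nowhere dense. -/
theorem omegaPow_vloop_nowhereDense {X S : Type*} [Fintype X] [Fintype S]
    [TopologicalSpace X] [DiscreteTopology X]
    (A : DetAuto X S) (Z : Set S) (s : S) (hZ : Z ∈ Loops A) (hs : s ∈ Z)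
    (hreach : ∀ t : S, ∃ u : List X, A.run A.start u = t)
    (ht : ¬ IsTerminalSCC A Z) :
    IsNowhereDense (omegaPow (Vloop A s Z)) := by
  classical
  obtain ⟨s', hs'Z, u, hu⟩ := NDAux.escape A hZ ht
  obtain ⟨ξ₀, -⟩ := id hZ
  show interior (closure (omegaPow (Vloop A s Z))) = ∅
  rw [Set.eq_empty_iff_forall_notMem]
  intro ξ hξ
  obtain ⟨n, hn⟩ := NDAux.exists_cyl_subset isOpen_interior hξ
  set w := NDAux.pfx ξ n with hwdef
  have hext : ∃ e : List X, A.run s (w ++ e) ∉ Z := by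
    by_cases hmem : A.run s w ∈ Z
    · obtain ⟨w₁, hw₁⟩ := NDAux.loop_reach A hZ hmem hs'Z
      refine ⟨w₁ ++ u, ?_⟩
      rw [← List.append_assoc, NDAux.run_append, NDAux.run_append, hw₁]
      exact hu
    · exact ⟨[], by rw [List.append_nil]; exact hmem⟩
  obtain ⟨e, he⟩ := hext
  set η := wordCat (w ++ e) ξ₀ with hηdef
  have hηin : η ∈ NDAux.cyl w :=
    NDAux.infPrefix_of_prefix ⟨e, rfl⟩ (NDAux.infPrefix_wordCat (w ++ e) ξ₀)
  have hηcl : η ∈ closure (omegaPow (Vloop A s Z)) := interior_subset (hn hηin)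
  obtain ⟨ξ', hξ'cyl, hξ'F⟩ := mem_closure_iff.mp hηcl _ (NDAux.isOpen_cyl (w ++ e))
    (NDAux.infPrefix_wordCat (w ++ e) ξ₀)
  have hpf : NDAux.pfx ξ' (w ++ e).length = w ++ e := NDAux.pfx_eq_of_infPrefix hξ'cyl
  have hrun := NDAux.run_pfx_mem A hs hξ'F (w ++ e).length
  rw [hpf] at hrun
  exact he hrun
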